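/- Let G be an M_t^r-free r-graph. Then there exists an M_t^r-free r-graph G′ on a vertex set [n′] with n′ ≤ |V(G)| that is dense and left-compressed and satisfies λ(G′) ≥ λ(G). -/
import Mathlib


open Finset

/-- The Lagrangian of a hypergraph `G` on vertex set `Fin n`. -/
noncomputable def lag {n : ℕ} (G : Finset (Finset (Fin n))) : ℝ :=
  sSup {v : ℝ | ∃ x : Fin n → ℝ, (∀ i, 0 ≤ x i) ∧ (∑ i, x i) = 1 ∧
    v = ∑ e ∈ G, ∏ i ∈ e, x i}

/-- `G` is `M_t^r`-free: `G` contains no `t` pairwise disjoint edges. -/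
def MtFree {n : ℕ} (t : ℕ) (G : Finset (Finset (Fin n))) : Prop :=
  ¬ ∃ S : Finset (Finset (Fin n)), S ⊆ G ∧ S.card = t ∧
      ∀ e ∈ S, ∀ f ∈ S, e ≠ f → Disjoint e f

/-- `G` is left-compressed: `L_G(j∖i) = ∅` whenever `i < j`, i.e., replacing `j`
by `i` in any edge containing `j` but not `i` again yields an edge. -/
def LeftCompressed {n : ℕ} (G : Finset (Finset (Fin n))) : Prop :=
  ∀ e ∈ G, ∀ i j : Fin n, i < j → j ∈ e → i ∉ e → insert i (e.erase j) ∈ G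

/-- `G` is dense: every proper subgraph has strictly smaller Lagrangian. -/
def LagDense {n : ℕ} (G : Finset (Finset (Fin n))) : Prop :=
  ∀ H : Finset (Finset (Fin n)), H ⊂ G → lag H < lag G

section Lemmas
variable {n : ℕ}

lemma lagSet_bddAbove (G : Finset (Finset (Fin n))) :
    BddAbove {v : ℝ | ∃ x : Fin n → ℝ, (∀ i, 0 ≤ x i) ∧ (∑ i, x i) = 1 ∧
      v = ∑ e ∈ G, ∏ i ∈ e, x i} := by
  refine ⟨(G.card : ℝ), ?_⟩
  rintro v ⟨x, hx0, hx1, rfl⟩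
  calc ∑ e ∈ G, ∏ i ∈ e, x i ≤ ∑ e ∈ G, 1 := by
        refine Finset.sum_le_sum fun e _ => Finset.prod_le_one (fun i _ => hx0 i) ?_
        intro i _
        calc x i ≤ ∑ k, x k := Finset.single_le_sum (fun k _ => hx0 k) (Finset.mem_univ i)
        _ = 1 := hx1
    _ = G.card := by simp

lemma lag_le_lag_of {G G' : Finset (Finset (Fin n))}
    (h : ∀ x : Fin n → ℝ, (∀ i, 0 ≤ x i) → (∑ i, x i) = 1 →
      ∃ y : Fin n → ℝ, (∀ i, 0 ≤ y i) ∧ (∑ i, y i) = 1 ∧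
        ∑ e ∈ G, ∏ i ∈ e, x i ≤ ∑ e ∈ G', ∏ i ∈ e, y i) :
    lag G ≤ lag G' := by
  rcases Nat.eq_zero_or_pos n with hn | hn
  · subst hn
    have hset : ∀ (H : Finset (Finset (Fin 0))),
        {v : ℝ | ∃ x : Fin 0 → ℝ, (∀ i, 0 ≤ x i) ∧ (∑ i, x i) = 1 ∧
          v = ∑ e ∈ H, ∏ i ∈ e, x i} = ∅ := by
      intro H
      ext v; simp
    unfold lag
    rw [hset G, hset G']
  · unfold lag
    have hne : {v : ℝ | ∃ x : Fin n → ℝ, (∀ i, 0 ≤ x i) ∧ (∑ i, x i) = 1 ∧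
        v = ∑ e ∈ G, ∏ i ∈ e, x i}.Nonempty := by
      refine ⟨∑ e ∈ G, ∏ i ∈ e, ((n : ℝ)⁻¹), fun _ => (n : ℝ)⁻¹, fun _ => by positivity, ?_, rfl⟩
      have : (n : ℝ) ≠ 0 := Nat.cast_ne_zero.2 hn.ne'
      simp [Finset.sum_const, this]
    refine csSup_le hne ?_
    rintro v ⟨x, hx0, hx1, rfl⟩
    obtain ⟨y, hy0, hy1, hle⟩ := h x hx0 hx1
    exact le_trans hle (le_csSup (lagSet_bddAbove G') ⟨y, hy0, hy1, rfl⟩)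

lemma lag_mono {H G : Finset (Finset (Fin n))} (h : H ⊆ G) : lag H ≤ lag G := by
  refine lag_le_lag_of fun x hx0 hx1 => ⟨x, hx0, hx1, ?_⟩
  exact Finset.sum_le_sum_of_subset_of_nonneg h
    (fun e _ _ => Finset.prod_nonneg fun i _ => hx0 i)

def pmove (i j : Fin n) (G : Finset (Finset (Fin n))) (e : Finset (Fin n)) : Finset (Fin n) :=
  if j ∈ e ∧ i ∉ e ∧ insert i (e.erase j) ∉ G then insert i (e.erase j) else e

def comp (i j : Fin n) (G : Finset (Finset (Fin n))) : Finset (Finset (Fin n)) :=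
  G.image (pmove i j G)

def psi (i j : Fin n) (G : Finset (Finset (Fin n))) (e : Finset (Fin n)) : Finset (Fin n) :=
  if j ∈ e ∧ i ∉ e ∧ insert i (e.erase j) ∈ G then insert i (e.erase j)
  else if i ∈ e ∧ j ∉ e ∧ insert j (e.erase i) ∈ G then insert j (e.erase i)
  else e

lemma rev_insert_erase {i j : Fin n} {e : Finset (Fin n)}
    (hj : j ∈ e) (hi : i ∉ e) : insert j ((insert i (e.erase j)).erase i) = e := by
  rw [Finset.erase_insert (fun h => hi (Finset.mem_of_mem_erase h)), Finset.insert_erase hj]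

lemma card_rep {i j : Fin n} {e : Finset (Fin n)} (hj : j ∈ e) (hi : i ∉ e) :
    (insert i (e.erase j)).card = e.card := by
  rw [Finset.card_insert_of_notMem (fun h => hi (Finset.mem_of_mem_erase h)),
    Finset.card_erase_of_mem hj]
  have := Finset.card_pos.2 ⟨j, hj⟩
  omega

lemma pmove_injOn {i j : Fin n} (hij : i ≠ j) (G : Finset (Finset (Fin n))) :
    Set.InjOn (pmove i j G) G := by
  intro e1 h1 e2 h2 heq
  unfold pmove at heq
  split_ifs at heq with c1 c2 c2
  · have h1' : e1.erase j = e2.erase j := by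
      ext a
      by_cases ha : a = i
      · subst ha; simp [c1.2.1, c2.2.1, Finset.mem_erase]
      · constructor
        · intro h
          rcases Finset.mem_insert.1 (heq ▸ Finset.mem_insert_of_mem h) with h' | h'
          · exact absurd h' ha
          · exact h'
        · intro h
          rcases Finset.mem_insert.1 (heq ▸ Finset.mem_insert_of_mem h) with h' | h'
          · exact absurd h' ha
          · exact h'
    rw [← Finset.insert_erase c1.1, ← Finset.insert_erase c2.1, h1']
  · exact absurd (heq ▸ h2) c1.2.2
  · exact absurd (heq ▸ h1) c2.2.2
  · exact heq

lemma comp_sum {i j : Fin n} (hij : i ≠ j) (G : Finset (Finset (Fin n)))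
    {M : Type*} [AddCommMonoid M] (f : Finset (Fin n) → M) :
    ∑ e ∈ comp i j G, f e = ∑ e ∈ G, f (pmove i j G e) :=
  Finset.sum_image (fun a ha b hb h => pmove_injOn hij G ha hb h)

lemma comp_card {i j : Fin n} {G : Finset (Finset (Fin n))} {r : ℕ}
    (hG : ∀ e ∈ G, e.card = r) : ∀ e ∈ comp i j G, e.card = r := by
  intro f hf
  obtain ⟨e, he, rfl⟩ := Finset.mem_image.1 hf
  unfold pmove
  split_ifs with c
  · rw [card_rep c.1 c.2.1]; exact hG e he
  · exact hG e he

lemma mem_image_swap {i j a : Fin n} {s : Finset (Fin n)} :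
    a ∈ s.image (Equiv.swap i j) ↔ Equiv.swap i j a ∈ s := by
  constructor
  · rintro h
    obtain ⟨b, hb, rfl⟩ := Finset.mem_image.1 h
    simpa using hb
  · intro h
    exact Finset.mem_image.2 ⟨Equiv.swap i j a, h, by simp⟩

lemma image_swap_of_both {i j : Fin n} {s : Finset (Fin n)}
    (h : (i ∈ s ∧ j ∈ s) ∨ (i ∉ s ∧ j ∉ s)) : s.image (Equiv.swap i j) = s := by
  ext a
  rw [mem_image_swap]
  by_cases hai : a = i
  · subst hai; rw [Equiv.swap_apply_left]; tauto
  · by_cases haj : a = j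
    · subst haj; rw [Equiv.swap_apply_right]; tauto
    · rw [Equiv.swap_apply_of_ne_of_ne hai haj]

lemma image_swap_of_j {i j : Fin n} (hij : i ≠ j) {s : Finset (Fin n)}
    (hj : j ∈ s) (hi : i ∉ s) : s.image (Equiv.swap i j) = insert i (s.erase j) := by
  ext a
  rw [mem_image_swap]
  by_cases hai : a = i
  · subst hai; rw [Equiv.swap_apply_left]; simp [hj]
  · by_cases haj : a = j
    · subst haj; rw [Equiv.swap_apply_right]
      simp [hi, hij, Ne.symm hij]
    · rw [Equiv.swap_apply_of_ne_of_ne hai haj]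
      simp [hai, haj, Finset.mem_erase]

lemma psi_mem {i j : Fin n} {G : Finset (Finset (Fin n))} {e : Finset (Fin n)} (he : e ∈ G) :
    psi i j G e ∈ G := by
  unfold psi; split_ifs with c1 c2
  · exact c1.2.2
  · exact c2.2.2
  · exact he

lemma psi_psi {i j : Fin n} (hij : i ≠ j) {G : Finset (Finset (Fin n))} {e : Finset (Fin n)}
    (he : e ∈ G) : psi i j G (psi i j G e) = e := by
  by_cases c1 : j ∈ e ∧ i ∉ e ∧ insert i (e.erase j) ∈ G
  · have h1 : psi i j G e = insert i (e.erase j) := by unfold psi; rw [if_pos c1]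
    have hif : i ∈ insert i (e.erase j) := Finset.mem_insert_self _ _
    have hjf : j ∉ insert i (e.erase j) := by simp [Ne.symm hij, Finset.mem_erase]
    rw [h1]
    unfold psi
    rw [if_neg (by tauto),
      if_pos ⟨hif, hjf, (rev_insert_erase c1.1 c1.2.1).symm ▸ he⟩,
      rev_insert_erase c1.1 c1.2.1]
  · by_cases c2 : i ∈ e ∧ j ∉ e ∧ insert j (e.erase i) ∈ G
    · have h1 : psi i j G e = insert j (e.erase i) := by unfold psi; rw [if_neg c1, if_pos c2]
      have hjg : j ∈ insert j (e.erase i) := Finset.mem_insert_self _ _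
      have hig : i ∉ insert j (e.erase i) := by simp [hij, Finset.mem_erase]
      rw [h1]
      unfold psi
      rw [if_pos ⟨hjg, hig, (rev_insert_erase c2.1 c2.2.1).symm ▸ he⟩,
        rev_insert_erase c2.1 c2.2.1]
    · have h1 : psi i j G e = e := by unfold psi; rw [if_neg c1, if_neg c2]
      rw [h1, h1]

end Lemmas
section Lag
variable {n : ℕ}

lemma prod_le_prod_pmove {i j : Fin n} {G : Finset (Finset (Fin n))} {y : Fin n → ℝ}
    (hy0 : ∀ v, 0 ≤ y v) (hy : y j ≤ y i) (e : Finset (Fin n)) :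
    ∏ v ∈ e, y v ≤ ∏ v ∈ pmove i j G e, y v := by
  unfold pmove
  split_ifs with c
  · rw [Finset.prod_insert (fun h => c.2.1 (Finset.mem_of_mem_erase h)),
      ← Finset.mul_prod_erase e y c.1]
    exact mul_le_mul_of_nonneg_right hy (Finset.prod_nonneg fun v _ => hy0 v)
  · exact le_refl _

lemma prod_psi_swap_le {i j : Fin n} (hij : i ≠ j) {G : Finset (Finset (Fin n))}
    {y : Fin n → ℝ} (hy0 : ∀ v, 0 ≤ y v) (hy : y j ≤ y i) {e : Finset (Fin n)} (he : e ∈ G) :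
    ∏ v ∈ (psi i j G e).image (Equiv.swap i j), y v ≤ ∏ v ∈ pmove i j G e, y v := by
  by_cases hj : j ∈ e <;> by_cases hi : i ∈ e
  · -- both
    have h1 : psi i j G e = e := by unfold psi; rw [if_neg (by tauto), if_neg (by tauto)]
    have h2 : pmove i j G e = e := by unfold pmove; rw [if_neg (by tauto)]
    rw [h1, h2, image_swap_of_both (Or.inl ⟨hi, hj⟩)]
  · -- j only
    by_cases hf : insert i (e.erase j) ∈ G
    · have h1 : psi i j G e = insert i (e.erase j) := by unfold psi; rw [if_pos ⟨hj, hi, hf⟩]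
      have h2 : pmove i j G e = e := by unfold pmove; rw [if_neg (by tauto)]
      have hif : i ∈ insert i (e.erase j) := Finset.mem_insert_self _ _
      have hjf : j ∉ insert i (e.erase j) := by simp [Ne.symm hij, Finset.mem_erase]
      have himg : (insert i (e.erase j)).image (Equiv.swap i j) = e := by
        have h3 := image_swap_of_j (i := j) (j := i) hij.symm hif hjf
        rw [← Equiv.swap_comm] at h3
        rw [h3, rev_insert_erase hj hi]
      rw [h1, h2, himg]
    · have h1 : psi i j G e = e := by unfold psi; rw [if_neg (by tauto), if_neg (by tauto)]
      have h2 : pmove i j G e = insert i (e.erase j) := by unfold pmove; rw [if_pos ⟨hj, hi, hf⟩]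
      rw [h1, h2, image_swap_of_j hij hj hi]
  · -- i only
    by_cases hg : insert j (e.erase i) ∈ G
    · have h1 : psi i j G e = insert j (e.erase i) := by
        unfold psi; rw [if_neg (by tauto), if_pos ⟨hi, hj, hg⟩]
      have h2 : pmove i j G e = e := by unfold pmove; rw [if_neg (by tauto)]
      have hjg : j ∈ insert j (e.erase i) := Finset.mem_insert_self _ _
      have hig : i ∉ insert j (e.erase i) := by simp [hij, Finset.mem_erase]
      rw [h1, h2, image_swap_of_j hij hjg hig, rev_insert_erase hi hj]
    · have h1 : psi i j G e = e := by unfold psi; rw [if_neg (by tauto), if_neg (by tauto)]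
      have h2 : pmove i j G e = e := by unfold pmove; rw [if_neg (by tauto)]
      rw [h1, h2]
      have himg : e.image (Equiv.swap i j) = insert j (e.erase i) := by
        have h3 := image_swap_of_j (i := j) (j := i) hij.symm hi hj
        rwa [← Equiv.swap_comm] at h3
      rw [himg, Finset.prod_insert (fun h => hj (Finset.mem_of_mem_erase h)),
        ← Finset.mul_prod_erase e y hi]
      exact mul_le_mul_of_nonneg_right hy (Finset.prod_nonneg fun v _ => hy0 v)
  · -- neither
    have h1 : psi i j G e = e := by unfold psi; rw [if_neg (by tauto), if_neg (by tauto)]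
    have h2 : pmove i j G e = e := by unfold pmove; rw [if_neg (by tauto)]
    rw [h1, h2, image_swap_of_both (Or.inr ⟨hi, hj⟩)]

lemma lag_comp_ge {i j : Fin n} (hij : i ≠ j) (G : Finset (Finset (Fin n))) :
    lag G ≤ lag (comp i j G) := by
  refine lag_le_lag_of fun x hx0 hx1 => ?_
  by_cases hx : x j ≤ x i
  · refine ⟨x, hx0, hx1, ?_⟩
    rw [comp_sum hij]
    exact Finset.sum_le_sum fun e _ => prod_le_prod_pmove hx0 hx e
  · push_neg at hx
    set y : Fin n → ℝ := x ∘ (Equiv.swap i j) with hy_def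
    have hy0 : ∀ v, 0 ≤ y v := fun v => hx0 _
    have hy1 : (∑ v, y v) = 1 := by
      calc (∑ v, y v) = ∑ v, x (Equiv.swap i j v) := rfl
        _ = ∑ v, x v := Equiv.sum_comp _ _
        _ = 1 := hx1
    have hyj : y j ≤ y i := by
      simp only [hy_def, Function.comp_apply, Equiv.swap_apply_left, Equiv.swap_apply_right]
      exact hx.le
    refine ⟨y, hy0, hy1, ?_⟩
    have step1 : ∑ e ∈ G, ∏ v ∈ e, x v = ∑ e ∈ G, ∏ v ∈ e.image (Equiv.swap i j), y v := by
      refine Finset.sum_congr rfl fun e _ => ?_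
      rw [Finset.prod_image (fun a _ b _ h => (Equiv.swap i j).injective h)]
      refine Finset.prod_congr rfl fun v _ => ?_
      simp [hy_def]
    have step2 : ∑ e ∈ G, ∏ v ∈ e.image (Equiv.swap i j), y v
        = ∑ e ∈ G, ∏ v ∈ (psi i j G e).image (Equiv.swap i j), y v := by
      refine Finset.sum_nbij' (fun e => psi i j G e) (fun e => psi i j G e) ?_ ?_ ?_ ?_ ?_
      · intro e he; exact psi_mem he
      · intro e he; exact psi_mem he
      · intro e he; exact psi_psi hij he
      · intro e he; exact psi_psi hij he
      · intro e he; rw [psi_psi hij he]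
    rw [step1, step2, comp_sum hij]
    exact Finset.sum_le_sum fun e he => prod_psi_swap_le hij hy0 hyj he

end Lag
section Free
variable {n t : ℕ}

lemma mem_comp_cases {i j : Fin n} {G : Finset (Finset (Fin n))} {s : Finset (Fin n)}
    (hs : s ∈ comp i j G) :
    s ∈ G ∨ (i ∈ s ∧ j ∉ s ∧ s ∉ G ∧ insert j (s.erase i) ∈ G) := by
  obtain ⟨e, heG, rfl⟩ := Finset.mem_image.1 hs
  unfold pmove
  split_ifs with c
  · right
    refine ⟨Finset.mem_insert_self _ _, ?_, c.2.2, ?_⟩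
    · intro h
      rcases Finset.mem_insert.1 h with h | h
      · exact c.2.1 (h ▸ c.1)
      · exact (Finset.mem_erase.1 h).1 rfl
    · rw [rev_insert_erase c.1 c.2.1]; exact heG
  · left; exact heG

lemma mtfree_comp {i j : Fin n} (hij : i ≠ j) {G : Finset (Finset (Fin n))}
    (h : MtFree t G) : MtFree t (comp i j G) := by
  rintro ⟨S, hSsub, hScard, hSdisj⟩
  apply h
  by_cases hall : ∀ s ∈ S, s ∈ G
  · exact ⟨S, fun s hs => hall s hs, hScard, hSdisj⟩
  push_neg at hall
  obtain ⟨s₀, hs₀S, hs₀G⟩ := hall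
  obtain ⟨hi₀, hj₀, -, he₀G⟩ := (mem_comp_cases (hSsub hs₀S)).resolve_left hs₀G
  set e₀ := insert j (s₀.erase i) with he₀def
  have hje₀ : j ∈ e₀ := Finset.mem_insert_self _ _
  have hothers : ∀ s ∈ S, s ≠ s₀ → s ∈ G ∧ i ∉ s := by
    intro s hs hne
    have hdisj := hSdisj s hs s₀ hs₀S hne
    have hi_not : i ∉ s := fun hmem => (Finset.disjoint_left.1 hdisj hmem) hi₀
    rcases mem_comp_cases (hSsub hs) with hc | hc
    · exact ⟨hc, hi_not⟩
    · exact absurd hc.1 hi_not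
  have he₀disj : ∀ s ∈ S, s ≠ s₀ → j ∉ s → Disjoint e₀ s := by
    intro s hs hne hjs
    rw [Finset.disjoint_left]
    intro a ha has
    rcases Finset.mem_insert.1 ha with rfl | ha'
    · exact hjs has
    · exact Finset.disjoint_left.1 (hSdisj s₀ hs₀S s hs (Ne.symm hne))
        (Finset.mem_of_mem_erase ha') has
  by_cases hj2 : ∃ s₁ ∈ S, j ∈ s₁
  · obtain ⟨s₁, hs₁S, hjs₁⟩ := hj2
    have hne₁₀ : s₁ ≠ s₀ := fun hh => hj₀ (hh ▸ hjs₁)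
    obtain ⟨hs₁G, his₁⟩ := hothers s₁ hs₁S hne₁₀
    have hf₁G : insert i (s₁.erase j) ∈ G := by
      obtain ⟨e, heG, hpe⟩ := Finset.mem_image.1 (hSsub hs₁S)
      unfold pmove at hpe
      split_ifs at hpe with c
      · exact absurd (hpe ▸ Finset.mem_insert_self i _) his₁
      · subst hpe
        by_contra hf
        exact c ⟨hjs₁, his₁, hf⟩
    set f₁ := insert i (s₁.erase j) with hf₁def
    have hif₁ : i ∈ f₁ := Finset.mem_insert_self _ _
    have hjf₁ : j ∉ f₁ := by simp [hf₁def, Ne.symm hij, Finset.mem_erase]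
    have hjnot : ∀ s ∈ S, s ≠ s₁ → j ∉ s := fun s hs hne hjs =>
      Finset.disjoint_left.1 (hSdisj s hs s₁ hs₁S hne) hjs hjs₁
    set T := (S.erase s₀).erase s₁ with hTdef
    have hmemT : ∀ s ∈ T, s ∈ S ∧ s ≠ s₀ ∧ s ≠ s₁ := by
      intro s hs
      have h1 := Finset.mem_erase.1 hs
      have h2 := Finset.mem_erase.1 h1.2
      exact ⟨h2.2, h2.1, h1.1⟩
    have d_e₀f₁ : Disjoint e₀ f₁ := by
      rw [Finset.disjoint_left]
      intro a ha haf
      rcases Finset.mem_insert.1 ha with rfl | ha'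
      · exact hjf₁ haf
      · rcases Finset.mem_insert.1 haf with rfl | haf'
        · exact (Finset.mem_erase.1 ha').1 rfl
        · exact Finset.disjoint_left.1 (hSdisj s₀ hs₀S s₁ hs₁S (Ne.symm hne₁₀))
            (Finset.mem_of_mem_erase ha') (Finset.mem_of_mem_erase haf')
    have d_e₀T : ∀ s ∈ T, Disjoint e₀ s := by
      intro s hs
      obtain ⟨hsS, hne0, hne1⟩ := hmemT s hs
      exact he₀disj s hsS hne0 (hjnot s hsS hne1)
    have d_f₁T : ∀ s ∈ T, Disjoint f₁ s := by
      intro s hs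
      obtain ⟨hsS, hne0, hne1⟩ := hmemT s hs
      rw [Finset.disjoint_left]
      intro a ha has
      rcases Finset.mem_insert.1 ha with rfl | ha'
      · exact (hothers s hsS hne0).2 has
      · exact Finset.disjoint_left.1 (hSdisj s₁ hs₁S s hsS (Ne.symm hne1))
          (Finset.mem_of_mem_erase ha') has
    have hf₁T : f₁ ∉ T := fun hh => (hothers f₁ (hmemT f₁ hh).1 (hmemT f₁ hh).2.1).2 hif₁
    have he₀T : e₀ ∉ insert f₁ T := by
      intro hh
      rcases Finset.mem_insert.1 hh with hh | hh
      · exact hjf₁ (hh ▸ hje₀)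
      · exact hjnot e₀ (hmemT e₀ hh).1 (hmemT e₀ hh).2.2 hje₀
    have hs₁' : s₁ ∈ S.erase s₀ := Finset.mem_erase.2 ⟨hne₁₀, hs₁S⟩
    have ht2 : 2 ≤ t := by
      have h1 : (S.erase s₀).card = t - 1 := by rw [Finset.card_erase_of_mem hs₀S, hScard]
      have h2 : 0 < (S.erase s₀).card := Finset.card_pos.2 ⟨s₁, hs₁'⟩
      have h3 : 0 < S.card := Finset.card_pos.2 ⟨s₀, hs₀S⟩
      omega
    refine ⟨insert e₀ (insert f₁ T), ?_, ?_, ?_⟩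
    · intro s hs
      rcases Finset.mem_insert.1 hs with rfl | hs
      · exact he₀G
      rcases Finset.mem_insert.1 hs with rfl | hs
      · exact hf₁G
      · exact (hothers s (hmemT s hs).1 (hmemT s hs).2.1).1
    · rw [Finset.card_insert_of_notMem he₀T, Finset.card_insert_of_notMem hf₁T,
        hTdef, Finset.card_erase_of_mem hs₁', Finset.card_erase_of_mem hs₀S, hScard]
      omega
    · intro a ha b hb hne
      rcases Finset.mem_insert.1 ha with rfl | ha
      · rcases Finset.mem_insert.1 hb with rfl | hb
        · exact absurd rfl hne
        rcases Finset.mem_insert.1 hb with rfl | hb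
        · exact d_e₀f₁
        · exact d_e₀T b hb
      rcases Finset.mem_insert.1 ha with rfl | ha
      · rcases Finset.mem_insert.1 hb with rfl | hb
        · exact d_e₀f₁.symm
        rcases Finset.mem_insert.1 hb with rfl | hb
        · exact absurd rfl hne
        · exact d_f₁T b hb
      · rcases Finset.mem_insert.1 hb with rfl | hb
        · exact (d_e₀T a ha).symm
        rcases Finset.mem_insert.1 hb with rfl | hb
        · exact (d_f₁T a ha).symm
        · exact hSdisj a (hmemT a ha).1 b (hmemT b hb).1 hne
  · push_neg at hj2
    have he₀E : e₀ ∉ S.erase s₀ := fun hh => hj2 e₀ (Finset.mem_of_mem_erase hh) hje₀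
    refine ⟨insert e₀ (S.erase s₀), ?_, ?_, ?_⟩
    · intro s hs
      rcases Finset.mem_insert.1 hs with rfl | hs
      · exact he₀G
      · exact (hothers s (Finset.mem_of_mem_erase hs) (Finset.ne_of_mem_erase hs)).1
    · rw [Finset.card_insert_of_notMem he₀E, Finset.card_erase_of_mem hs₀S, hScard]
      have : 0 < S.card := Finset.card_pos.2 ⟨s₀, hs₀S⟩
      omega
    · intro a ha b hb hne
      rcases Finset.mem_insert.1 ha with rfl | ha
      · rcases Finset.mem_insert.1 hb with rfl | hb
        · exact absurd rfl hne
        · exact he₀disj b (Finset.mem_of_mem_erase hb) (Finset.ne_of_mem_erase hb)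
            (hj2 b (Finset.mem_of_mem_erase hb))
      · rcases Finset.mem_insert.1 hb with rfl | hb
        · exact (he₀disj a (Finset.mem_of_mem_erase ha) (Finset.ne_of_mem_erase ha)
            (hj2 a (Finset.mem_of_mem_erase ha))).symm
        · exact hSdisj a (Finset.mem_of_mem_erase ha) b (Finset.mem_of_mem_erase hb) hne

end Free
section Main
variable {n : ℕ}

def wt (G : Finset (Finset (Fin n))) : ℕ := ∑ e ∈ G, ∑ v ∈ e, (v : ℕ)

lemma wt_mono {H G : Finset (Finset (Fin n))} (h : H ⊆ G) : wt H ≤ wt G :=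
  Finset.sum_le_sum_of_subset h

lemma wt_comp_lt {i j : Fin n} (hij : i < j) {G : Finset (Finset (Fin n))}
    {e₀ : Finset (Fin n)} (he₀ : e₀ ∈ G)
    (hcond : j ∈ e₀ ∧ i ∉ e₀ ∧ insert i (e₀.erase j) ∉ G) :
    wt (comp i j G) < wt G := by
  unfold wt
  rw [comp_sum hij.ne]
  have key : ∀ e : Finset (Fin n), (j ∈ e ∧ i ∉ e ∧ insert i (e.erase j) ∉ G) →
      ∑ v ∈ pmove i j G e, (v : ℕ) < ∑ v ∈ e, (v : ℕ) := by
    intro e c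
    have h1 : pmove i j G e = insert i (e.erase j) := by unfold pmove; rw [if_pos c]
    rw [h1, Finset.sum_insert (fun hh => c.2.1 (Finset.mem_of_mem_erase hh)),
      ← Finset.add_sum_erase e _ c.1]
    have : (i : ℕ) < (j : ℕ) := hij
    omega
  refine Finset.sum_lt_sum ?_ ⟨e₀, he₀, key e₀ hcond⟩
  intro e he
  by_cases c : j ∈ e ∧ i ∉ e ∧ insert i (e.erase j) ∉ G
  · exact (key e c).le
  · have : pmove i j G e = e := by unfold pmove; rw [if_neg c]
    rw [this]

lemma exists_dense_sub (G : Finset (Finset (Fin n))) :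
    ∃ H, H ⊆ G ∧ lag H = lag G ∧ LagDense H := by
  classical
  set 𝒮 := G.powerset.filter (fun H => lag H = lag G) with h𝒮
  have hG𝒮 : G ∈ 𝒮 := Finset.mem_filter.2 ⟨Finset.mem_powerset_self G, rfl⟩
  obtain ⟨H, hH, hmin⟩ := 𝒮.exists_min_image Finset.card ⟨G, hG𝒮⟩
  have hHsub : H ⊆ G := Finset.mem_powerset.1 (Finset.mem_filter.1 hH).1
  have hHlag : lag H = lag G := (Finset.mem_filter.1 hH).2
  refine ⟨H, hHsub, hHlag, ?_⟩
  intro H' hss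
  rcases lt_or_eq_of_le (lag_mono hss.subset) with h | h
  · exact h
  · exfalso
    have hH'𝒮 : H' ∈ 𝒮 := Finset.mem_filter.2
      ⟨Finset.mem_powerset.2 (hss.subset.trans hHsub), h.symm ▸ hHlag⟩
    exact absurd (Finset.card_lt_card hss) (not_lt.2 (hmin H' hH'𝒮))

lemma main_aux {r t : ℕ} : ∀ m : ℕ, ∀ G : Finset (Finset (Fin n)), wt G ≤ m →
    (∀ e ∈ G, e.card = r) → MtFree t G →
    ∃ G' : Finset (Finset (Fin n)), (∀ e ∈ G', e.card = r) ∧ MtFree t G' ∧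
      LagDense G' ∧ LeftCompressed G' ∧ lag G ≤ lag G' := by
  intro m
  induction m using Nat.strong_induction_on with
  | _ m ih =>
    intro G hwt hG hfree
    obtain ⟨H, hHsub, hHlag, hHdense⟩ := exists_dense_sub G
    have hHuni : ∀ e ∈ H, e.card = r := fun e he => hG e (hHsub he)
    have hHfree : MtFree t H := by
      rintro ⟨S, hS, hc, hd⟩
      exact hfree ⟨S, hS.trans hHsub, hc, hd⟩
    by_cases hlc : LeftCompressed H
    · exact ⟨H, hHuni, hHfree, hHdense, hlc, hHlag.ge⟩
    · unfold LeftCompressed at hlc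
      push_neg at hlc
      obtain ⟨e₀, he₀H, i, j, hij, hje, hie, hnot⟩ := hlc
      have hwtlt : wt (comp i j H) < wt H := wt_comp_lt hij he₀H ⟨hje, hie, hnot⟩
      have hwtH : wt H ≤ wt G := wt_mono hHsub
      obtain ⟨G', h1, h2, h3, h4, h5⟩ := ih (wt (comp i j H)) (by omega)
        (comp i j H) le_rfl (comp_card hHuni) (mtfree_comp hij.ne hHfree)
      refine ⟨G', h1, h2, h3, h4, ?_⟩
      calc lag G = lag H := hHlag.symm
        _ ≤ lag (comp i j H) := lag_comp_ge hij.ne H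
        _ ≤ lag G' := h5

end Main

/-- Every `M_t^r`-free `r`-graph `G` on `[n]` admits an `M_t^r`-free, dense and
left-compressed `r`-graph `G'` on at most `n` vertices with `λ(G') ≥ λ(G)`. -/
theorem exists_dense_left_compressed {n r t : ℕ} (G : Finset (Finset (Fin n)))
    (hG : ∀ e ∈ G, e.card = r) (hfree : MtFree t G) :
    ∃ n' ≤ n, ∃ G' : Finset (Finset (Fin n')),
      (∀ e ∈ G', e.card = r) ∧ MtFree t G' ∧ LagDense G' ∧ LeftCompressed G' ∧
      lag G ≤ lag G' := by
  exact ⟨n, le_rfl, main_aux (wt G) G le_rfl hG hfree⟩
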